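/- Let k, m, n be positive integers with k+m ≤ n and let w, w′ ∈ Sₙ. Then w →_{r[k,m]} w′ if and only if w₀ww₀ →_{c[n−k,m]} w₀w′w₀. -/
import Mathlib


open Equiv MvPolynomial

attribute [local instance] Classical.propDecidable

namespace SchubertPieri

/-- Position `j ∈ {1,…,N}` (1-indexed) as an element of `Fin N` (0-indexed). -/
def pos (N : ℕ) [NeZero N] (j : ℕ) : Fin N :=
  ⟨(j - 1) % N, Nat.mod_lt _ (Nat.pos_of_ne_zero (NeZero.ne N))⟩

/-- The transposition `t_{a,b}` interchanging positions `a` and `b` (1-indexed). -/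
def t (N : ℕ) [NeZero N] (a b : ℕ) : Equiv.Perm (Fin N) :=
  Equiv.swap (pos N a) (pos N b)

/-- The value `w(j)` for `j ∈ {1,…,N}` (1-indexed). -/
def val {N : ℕ} [NeZero N] (w : Equiv.Perm (Fin N)) (j : ℕ) : ℕ :=
  (w (pos N j) : ℕ) + 1

/-- The length of `w`: its number of inversions. -/
def len {N : ℕ} (w : Equiv.Perm (Fin N)) : ℕ :=
  (Finset.univ.filter fun p : Fin N × Fin N => p.1 < p.2 ∧ w p.2 < w p.1).card

/-- The longest permutation `w₀ : j ↦ N+1-j`. -/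
def w0 (N : ℕ) : Equiv.Perm (Fin N) :=
  ⟨Fin.rev, Fin.rev, Fin.rev_rev, Fin.rev_rev⟩

/-- The product `t_{a 0, b 0} ⋯ t_{a (i-1), b (i-1)}`. -/
def tProd (N : ℕ) [NeZero N] (a b : ℕ → ℕ) (i : ℕ) : Equiv.Perm (Fin N) :=
  ((List.range i).map fun j => t N (a j) (b j)).prod

/-- `r[k,m] = t_{k,k+1} t_{k,k+2} ⋯ t_{k,k+m}`, the (m+1)-cycle with
`r[k,m](k) = k+m` and `r[k,m](j) = j-1` for `k+1 ≤ j ≤ k+m`. -/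
def rPerm (N k m : ℕ) [NeZero N] : Equiv.Perm (Fin N) :=
  ((List.range m).map fun i => t N k (k + 1 + i)).prod

/-- `c[k,m] = t_{k,k+1} t_{k-1,k+1} ⋯ t_{k-m+1,k+1}`, the (m+1)-cycle with
`c[k,m](j) = j+1` for `k-m+1 ≤ j ≤ k` and `c[k,m](k+1) = k-m+1`. -/
def cPerm (N k m : ℕ) [NeZero N] : Equiv.Perm (Fin N) :=
  ((List.range m).map fun i => t N (k - i) (k + 1)).prod

/-- The conditions that `aᵢ ≤ k < bᵢ` (with all indices in `{1,…,N}`) and that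
`ℓ(w t_{a₁ b₁} ⋯ t_{aᵢ bᵢ}) = ℓ(w) + i` for `1 ≤ i ≤ m`. -/
def StepOK (N k m : ℕ) [NeZero N] (w : Equiv.Perm (Fin N)) (a b : ℕ → ℕ) : Prop :=
  (∀ i, i < m → 1 ≤ a i ∧ a i ≤ k ∧ k < b i ∧ b i ≤ N) ∧
  (∀ i, i ≤ m → len (w * tProd N a b i) = len w + i)

/-- `w →_{r[k,m]} w'`. -/
def RelR (N k m : ℕ) [NeZero N] (w w' : Equiv.Perm (Fin N)) : Prop :=
  ∃ a b : ℕ → ℕ, StepOK N k m w a b ∧ w' = w * tProd N a b m ∧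
    (∀ i j, i < m → j < m → i ≠ j → b i ≠ b j)

/-- `w →_{c[k,m]} w'`. -/
def RelC (N k m : ℕ) [NeZero N] (w w' : Equiv.Perm (Fin N)) : Prop :=
  ∃ a b : ℕ → ℕ, StepOK N k m w a b ∧ w' = w * tProd N a b m ∧
    (∀ i j, i < m → j < m → i ≠ j → a i ≠ a j)

/-- The divided difference operator `∂ᵢ f = (f - sᵢ·f)/(xᵢ - xᵢ₊₁)` (1-indexed `i`);
the quotient is exact, and is recovered here as the (unique) witness of divisibility. -/
noncomputable def divDiff {N : ℕ} [NeZero N] (i : ℕ) (f : MvPolynomial (Fin N) ℤ) :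
    MvPolynomial (Fin N) ℤ :=
  if h : (X (pos N i) - X (pos N (i + 1))) ∣ (f - rename (⇑(t N i (i + 1))) f) then
    h.choose
  else 0

/-- `∂_{a₁} ∘ ⋯ ∘ ∂_{a_p}` applied to `f`, for a word `l = [a₁,…,a_p]`. -/
noncomputable def divDiffWord {N : ℕ} [NeZero N] (l : List ℕ) (f : MvPolynomial (Fin N) ℤ) :
    MvPolynomial (Fin N) ℤ :=
  l.foldr divDiff f

/-- Auxiliary: produce a reduced word for `w` by repeatedly removing a descent. -/
def redWordAux (N : ℕ) [NeZero N] : ℕ → Equiv.Perm (Fin N) → List ℕ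
  | 0, _ => []
  | fuel + 1, w =>
    match ((List.range (N - 1)).map (· + 1)).find? (fun i => decide (val w (i + 1) < val w i)) with
    | none => []
    | some i => redWordAux N fuel (w * t N i (i + 1)) ++ [i]

/-- A canonical reduced word `(a₁,…,a_p)` for `w`, i.e. `w = s_{a₁} ⋯ s_{a_p}` with `p = ℓ(w)`. -/
def redWord (N : ℕ) [NeZero N] (w : Equiv.Perm (Fin N)) : List ℕ :=
  redWordAux N (N * N) w

/-- The staircase monomial `x₁^{N-1} x₂^{N-2} ⋯ x_{N-1}`. -/
noncomputable def staircase (N : ℕ) : MvPolynomial (Fin N) ℤ :=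
  ∏ i : Fin N, X i ^ (N - 1 - (i : ℕ))

/-- The Schubert polynomial `𝔖_w = ∂_{w⁻¹w₀}(x₁^{N-1} ⋯ x_{N-1})`. -/
noncomputable def schubertPoly (N : ℕ) [NeZero N] (w : Equiv.Perm (Fin N)) :
    MvPolynomial (Fin N) ℤ :=
  divDiffWord (redWord N (w⁻¹ * w0 N)) (staircase N)

/-- The ideal of `Rₙ` generated by the symmetric polynomials with zero constant term. -/
noncomputable def symIdeal (N : ℕ) : Ideal (MvPolynomial (Fin N) ℤ) :=
  Ideal.span {f : MvPolynomial (Fin N) ℤ | f.IsSymmetric ∧ constantCoeff f = 0}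

/-- The ring `Hₙ = Rₙ/𝒮`. -/
abbrev HRing (N : ℕ) := MvPolynomial (Fin N) ℤ ⧸ symIdeal N

/-- The class of the Schubert polynomial `𝔖_w` in `Hₙ`. -/
noncomputable def SS (N : ℕ) [NeZero N] (w : Equiv.Perm (Fin N)) : HRing N :=
  Ideal.Quotient.mk (symIdeal N) (schubertPoly N w)

/-- The complete homogeneous symmetric polynomial of degree `m` in `x₁,…,x_k`. -/
noncomputable def hPoly (N k m : ℕ) : MvPolynomial (Fin N) ℤ :=
  ∑ s ∈ (Finset.univ.filter fun i : Fin N => (i : ℕ) < k).sym m,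
    (Multiset.map X (s : Multiset (Fin N))).prod

/-- The elementary symmetric polynomial of degree `m` in `x₁,…,x_k`. -/
noncomputable def ePoly (N k m : ℕ) : MvPolynomial (Fin N) ℤ :=
  ∑ s ∈ (Finset.univ.filter fun i : Fin N => (i : ℕ) < k).powersetCard m, ∏ i ∈ s, X i

/-- Covering relation of the `k`-Bruhat order. -/
def kCover (N k : ℕ) [NeZero N] (w w' : Equiv.Perm (Fin N)) : Prop :=
  ∃ a b : ℕ, 1 ≤ a ∧ a ≤ k ∧ k < b ∧ b ≤ N ∧ w' = w * t N a b ∧ len w' = len w + 1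

/-- The (strict) `k`-Bruhat order `<ₖ`. -/
def kBruhat (N k : ℕ) [NeZero N] : Equiv.Perm (Fin N) → Equiv.Perm (Fin N) → Prop :=
  Relation.TransGen (kCover N k)

/-- The label `w⁽ⁱ⁺¹⁾(a_{i+1})` (0-indexed `i`) of the `(i+1)`-st step of a path. -/
def label {N : ℕ} [NeZero N] (w : Equiv.Perm (Fin N)) (a b : ℕ → ℕ) (i : ℕ) : ℕ :=
  val (w * tProd N a b (i + 1)) (a i)

/-- `(a,b)` encodes a path of length `m` in the `k`-Bruhat order from `w` to `w'`
(normalized so that `a i = b i = 0` for `i ≥ m`, making the encoding unique). -/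
def PathWit (N k m : ℕ) [NeZero N] (w w' : Equiv.Perm (Fin N))
    (ab : (ℕ → ℕ) × (ℕ → ℕ)) : Prop :=
  StepOK N k m w ab.1 ab.2 ∧ w' = w * tProd N ab.1 ab.2 m ∧
    ∀ i, m ≤ i → ab.1 i = 0 ∧ ab.2 i = 0

/-- Paths of length `m` in the `k`-Bruhat order from `w` to `w'` with strictly
increasing labels. -/
def IncPaths (N k m : ℕ) [NeZero N] (w w' : Equiv.Perm (Fin N)) :
    Set ((ℕ → ℕ) × (ℕ → ℕ)) :=
  {ab | PathWit N k m w w' ab ∧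
    ∀ i j, i < j → j < m → label w ab.1 ab.2 i < label w ab.1 ab.2 j}

/-- Paths of length `m` in the `k`-Bruhat order from `w` to `w'` with strictly
decreasing labels. -/
def DecPaths (N k m : ℕ) [NeZero N] (w w' : Equiv.Perm (Fin N)) :
    Set ((ℕ → ℕ) × (ℕ → ℕ)) :=
  {ab | PathWit N k m w w' ab ∧
    ∀ i j, i < j → j < m → label w ab.1 ab.2 j < label w ab.1 ab.2 i}


/-- The cycle `(x₁ x₂ … x_r)` (sending `x₁ ↦ x₂ ↦ ⋯ ↦ x_r ↦ x₁`), as a product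
of transpositions. -/
def cycleList (N : ℕ) [NeZero N] (l : List ℕ) : Equiv.Perm (Fin N) :=
  ((l.zip l.tail).map fun p => t N p.1 p.2).prod

/-- The Grassmannian permutation `h[k;p,q]` of descent `k` and hook shape `(p,1^{q-1})`:
the `(p+q)`-cycle `(k-q+1  k-q+2 … k  k+p  k+p-1 … k+1)`. -/
def hookPerm (N k p q : ℕ) [NeZero N] : Equiv.Perm (Fin N) :=
  cycleList N (((List.range q).map fun i => k - q + 1 + i) ++
    ((List.range p).reverse.map fun i => k + 1 + i))

/-- `w|ₚ ∈ S_{N-1}`: delete row `p` and column `w(p)` from the permutation matrix of `w`. -/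
def drop {N : ℕ} (w : Equiv.Perm (Fin (N + 1))) (p : Fin (N + 1)) : Equiv.Perm (Fin N) :=
  Equiv.removeNone (((finSuccEquiv' p).symm.trans (w : Fin (N + 1) ≃ Fin (N + 1))).trans
    (finSuccEquiv' (w p)))

/-- `lam` is a partition with at most `k` parts (1-indexed parts `lam 1 ≥ lam 2 ≥ ⋯`,
normalized by `lam 0 = 0`). -/
def IsPartFun (k : ℕ) (lam : ℕ → ℕ) : Prop :=
  lam 0 = 0 ∧ (∀ j, 1 ≤ j → lam (j + 1) ≤ lam j) ∧ ∀ j, k < j → lam j = 0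

/-- `h_d(x₁,…,x_k)` for an integer `d`, with `h_d = 0` for `d < 0`. -/
noncomputable def hPolyZ (N k : ℕ) (d : ℤ) : MvPolynomial (Fin N) ℤ :=
  if 0 ≤ d then hPoly N k d.toNat else 0

/-- The Schur polynomial `s_λ(x₁,…,x_k)`, via the Jacobi–Trudi determinant
`det(h_{λᵢ+j-i})_{1 ≤ i,j ≤ k}`. -/
noncomputable def schurPoly (N k : ℕ) (lam : ℕ → ℕ) : MvPolynomial (Fin N) ℤ :=
  (Matrix.of fun i j : Fin k =>
    hPolyZ N k ((lam ((i : ℕ) + 1) : ℤ) + (j : ℕ) - (i : ℕ))).det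

/-- `r_j = #{i : aᵢ = j}` (with `i` ranging over `0,…,m-1`, 0-indexed). -/
def rJ (a : ℕ → ℕ) (m j : ℕ) : ℕ := ((Finset.range m).filter fun i => a i = j).card

/-- `μ_j = r_{j+1} + ⋯ + r_k`. -/
def muJ (a : ℕ → ℕ) (m k j : ℕ) : ℕ :=
  if j = 0 then 0 else ∑ j' ∈ Finset.Icc (j + 1) k, rJ a m j'

/-- `λ_j = μ_j + r_j`. -/
def lamJ (a : ℕ → ℕ) (m k j : ℕ) : ℕ :=
  if j = 0 then 0 else muJ a m k j + rJ a m j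

/-- `d_j = #{i : bᵢ = N+1-j}` (with `i` ranging over `0,…,m-1`, 0-indexed). -/
def dJ (b : ℕ → ℕ) (m N j : ℕ) : ℕ :=
  ((Finset.range m).filter fun i => b i = N + 1 - j).card

/-- `μ′_j = d_{j+1} + ⋯ + d_{N-k}`. -/
def muJ' (b : ℕ → ℕ) (m N k j : ℕ) : ℕ :=
  if j = 0 then 0 else ∑ j' ∈ Finset.Icc (j + 1) (N - k), dJ b m N j'

/-- `λ′_j = μ′_j + d_j`. -/
def lamJ' (b : ℕ → ℕ) (m N k j : ℕ) : ℕ :=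
  if j = 0 then 0 else muJ' b m N k j + dJ b m N j

/-- The conjugate (transpose) partition: `νᵗ_j = #{i : νᵢ ≥ j}`, for `ν` with at
most `k` parts. -/
def conjPart (k : ℕ) (nu : ℕ → ℕ) (j : ℕ) : ℕ :=
  if j = 0 then 0 else ((Finset.Icc 1 k).filter fun i => j ≤ nu i).card

/-- `wv` is the Grassmannian permutation of descent `k` and shape `nu`:
`wv(j) = j + ν_{k+1-j}` for `1 ≤ j ≤ k`, and `wv` is increasing on `{k+1,…,N}`. -/
def IsGrassOf (N k : ℕ) [NeZero N] (nu : ℕ → ℕ) (wv : Equiv.Perm (Fin N)) : Prop :=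
  (∀ j, 1 ≤ j → j ≤ k → val wv j = j + nu (k + 1 - j)) ∧
  (∀ j, k < j → j < N → val wv j < val wv (j + 1))

/-- Paths of length `m` in the `k`-Bruhat order from `w` to `w'` whose labels
increase strictly for the first `p` steps and decrease strictly thereafter
(positions `p, p+1, …, m` being decreasing, 1-indexed). -/
def IncDecPaths (N k m p : ℕ) [NeZero N] (w w' : Equiv.Perm (Fin N)) :
    Set ((ℕ → ℕ) × (ℕ → ℕ)) :=
  {ab | PathWit N k m w w' ab ∧
    (∀ i j, i < j → j < p → label w ab.1 ab.2 i < label w ab.1 ab.2 j) ∧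
    (∀ i j, p - 1 ≤ i → i < j → j < m → label w ab.1 ab.2 j < label w ab.1 ab.2 i)}

/-- Paths of length `m` in the `k`-Bruhat order from `w` to `w'` whose labels
decrease strictly for the first `q` steps and increase strictly thereafter. -/
def DecIncPaths (N k m q : ℕ) [NeZero N] (w w' : Equiv.Perm (Fin N)) :
    Set ((ℕ → ℕ) × (ℕ → ℕ)) :=
  {ab | PathWit N k m w w' ab ∧
    (∀ i j, i < j → j < q → label w ab.1 ab.2 j < label w ab.1 ab.2 i) ∧
    (∀ i j, q - 1 ≤ i → i < j → j < m → label w ab.1 ab.2 i < label w ab.1 ab.2 j)}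


section ConjAux

variable {N : ℕ} [NeZero N]

lemma w0_apply' (x : Fin N) : w0 N x = Fin.rev x := rfl

lemma w0_sq (N : ℕ) : w0 N * w0 N = 1 :=
  Equiv.ext fun x => Fin.rev_rev x

lemma w0_inv (N : ℕ) : (w0 N)⁻¹ = w0 N :=
  inv_eq_of_mul_eq_one_right (w0_sq N)

lemma conj_mul (u v : Equiv.Perm (Fin N)) :
    (w0 N * u * w0 N) * (w0 N * v * w0 N) = w0 N * (u * v) * w0 N := by
  rw [show (w0 N * u * w0 N) * (w0 N * v * w0 N)
      = w0 N * u * (w0 N * w0 N) * v * w0 N by group, w0_sq]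
  group

lemma w0_pos {j : ℕ} (h1 : 1 ≤ j) (h2 : j ≤ N) :
    w0 N (pos N j) = pos N (N + 1 - j) := by
  have hN : 0 < N := Nat.pos_of_ne_zero (NeZero.ne N)
  rw [w0_apply']
  apply Fin.ext
  rw [Fin.val_rev]
  simp only [pos]
  rw [Nat.mod_eq_of_lt (by omega), Nat.mod_eq_of_lt (by omega)]
  omega

lemma t_conj {a b : ℕ} (ha1 : 1 ≤ a) (haN : a ≤ N) (hb1 : 1 ≤ b) (hbN : b ≤ N) :
    w0 N * t N a b * w0 N = t N (N + 1 - b) (N + 1 - a) := by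
  have key : t N (N + 1 - b) (N + 1 - a) = w0 N * t N a b * (w0 N)⁻¹ := by
    rw [t, t, ← w0_pos hb1 hbN, ← w0_pos ha1 haN, Equiv.swap_apply_apply,
      Equiv.swap_comm (pos N b) (pos N a)]
  rw [key, w0_inv]

lemma tProd_succ (a b : ℕ → ℕ) (i : ℕ) :
    tProd N a b (i + 1) = tProd N a b i * t N (a i) (b i) := by
  simp [tProd, List.range_succ]

lemma tProd_conj (a b : ℕ → ℕ) (i : ℕ)
    (h : ∀ j, j < i → 1 ≤ a j ∧ a j ≤ N ∧ 1 ≤ b j ∧ b j ≤ N) :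
    tProd N (fun j => N + 1 - b j) (fun j => N + 1 - a j) i
      = w0 N * tProd N a b i * w0 N := by
  induction i with
  | zero => simp [tProd, w0_sq]
  | succ i ih =>
    obtain ⟨h1, h2, h3, h4⟩ := h i (Nat.lt_succ_self i)
    rw [tProd_succ, tProd_succ, ih (fun j hj => h j (hj.trans (Nat.lt_succ_self i))),
      ← t_conj h1 h2 h3 h4, conj_mul]

lemma len_conj (u : Equiv.Perm (Fin N)) : len (w0 N * u * w0 N) = len u := by
  have happ : ∀ p : Fin N, (w0 N * u * w0 N) p = Fin.rev (u (Fin.rev p)) := fun p => rfl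
  unfold len
  apply Finset.card_bij' (i := fun (p : Fin N × Fin N) _ => (Fin.rev p.2, Fin.rev p.1))
    (j := fun (p : Fin N × Fin N) _ => (Fin.rev p.2, Fin.rev p.1))
  · intro p hp
    simp only [Finset.mem_filter, Finset.mem_univ, true_and, happ] at hp ⊢
    exact ⟨Fin.rev_lt_rev.mpr hp.1, by
      simpa [Fin.rev_rev] using Fin.rev_lt_rev.mp hp.2⟩
  · intro p hp
    simp only [Finset.mem_filter, Finset.mem_univ, true_and, happ] at hp ⊢
    exact ⟨Fin.rev_lt_rev.mpr hp.1, by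
      simpa [Fin.rev_rev] using Fin.rev_lt_rev.mpr hp.2⟩
  · intro p _; simp [Fin.rev_rev]
  · intro p _; simp [Fin.rev_rev]

lemma relR_to_relC (k m : ℕ) (hkN : k ≤ N) (w w' : Equiv.Perm (Fin N))
    (h : RelR N k m w w') :
    RelC N (N - k) m (w0 N * w * w0 N) (w0 N * w' * w0 N) := by
  obtain ⟨a, b, ⟨hbd, hlen⟩, hw', hdist⟩ := h
  have hbd' : ∀ j, j < m → 1 ≤ a j ∧ a j ≤ N ∧ 1 ≤ b j ∧ b j ≤ N := by
    intro j hj; obtain ⟨h1, h2, h3, h4⟩ := hbd j hj; exact ⟨h1, by omega, by omega, h4⟩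
  refine ⟨fun i => N + 1 - b i, fun i => N + 1 - a i, ⟨?_, ?_⟩, ?_, ?_⟩
  · intro i hi
    obtain ⟨h1, h2, h3, h4⟩ := hbd i hi
    dsimp only
    omega
  · intro i hi
    rw [tProd_conj a b i (fun j hj => hbd' j (lt_of_lt_of_le hj hi)), conj_mul,
      len_conj, len_conj, hlen i hi]
  · rw [tProd_conj a b m hbd', conj_mul, ← hw']
  · intro i j hi hj hij
    have := hdist i j hi hj hij
    have h1 := (hbd i hi).2.2.2
    have h2 := (hbd j hj).2.2.2
    have h3 := (hbd i hi).2.2.1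
    have h4 := (hbd j hj).2.2.1
    dsimp only
    omega

lemma relC_to_relR (k m : ℕ) (hkN : k ≤ N) (w w' : Equiv.Perm (Fin N))
    (h : RelC N k m w w') :
    RelR N (N - k) m (w0 N * w * w0 N) (w0 N * w' * w0 N) := by
  obtain ⟨a, b, ⟨hbd, hlen⟩, hw', hdist⟩ := h
  have hbd' : ∀ j, j < m → 1 ≤ a j ∧ a j ≤ N ∧ 1 ≤ b j ∧ b j ≤ N := by
    intro j hj; obtain ⟨h1, h2, h3, h4⟩ := hbd j hj; exact ⟨h1, by omega, by omega, h4⟩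
  refine ⟨fun i => N + 1 - b i, fun i => N + 1 - a i, ⟨?_, ?_⟩, ?_, ?_⟩
  · intro i hi
    obtain ⟨h1, h2, h3, h4⟩ := hbd i hi
    dsimp only
    omega
  · intro i hi
    rw [tProd_conj a b i (fun j hj => hbd' j (lt_of_lt_of_le hj hi)), conj_mul,
      len_conj, len_conj, hlen i hi]
  · rw [tProd_conj a b m hbd', conj_mul, ← hw']
  · intro i j hi hj hij
    have := hdist i j hi hj hij
    have h1 := (hbd i hi).1
    have h2 := (hbd j hj).1
    have h3 := (hbd i hi).2.1
    have h4 := (hbd j hj).2.1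
    dsimp only
    omega

lemma conj_conj (u : Equiv.Perm (Fin N)) :
    w0 N * (w0 N * u * w0 N) * w0 N = u := by
  rw [show w0 N * (w0 N * u * w0 N) * w0 N
      = (w0 N * w0 N) * u * (w0 N * w0 N) by group, w0_sq, one_mul, mul_one]

end ConjAux

/-- `w →_{r[k,m]} w'` iff `w₀ww₀ →_{c[n-k,m]} w₀w'w₀` (here the paper's `n` is `n+1`). -/
theorem relR_iff_relC_conj (n k m : ℕ) (hk : 1 ≤ k) (hm : 1 ≤ m) (hkm : k + m ≤ n + 1)
    (w w' : Equiv.Perm (Fin (n + 1))) :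
    RelR (n + 1) k m w w' ↔
      RelC (n + 1) (n + 1 - k) m (w0 (n + 1) * w * w0 (n + 1))
        (w0 (n + 1) * w' * w0 (n + 1)) := by
  have hkN : k ≤ n + 1 := by omega
  constructor
  · exact relR_to_relC k m hkN w w'
  · intro h
    have := relC_to_relR (n + 1 - k) m (by omega)
      (w0 (n + 1) * w * w0 (n + 1)) (w0 (n + 1) * w' * w0 (n + 1)) h
    rw [show n + 1 - (n + 1 - k) = k by omega, conj_conj, conj_conj] at this
    exact this

end SchubertPieri
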